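/- Let k be a commutative ring and H a cocommutative Hopf algebra over k with antipode S, multiplication m and comultiplication Δ. Let Φ : H ⊗ H → H ⊗ H be the k-linear map determined (in Sweedler notation) by Φ(x ⊗ y) = Σ x_{(1)} ⊗ x_{(2)}·y·S(x_{(3)}), i.e. Φ is the composite (id_H ⊗ m) ∘ (id_H ⊗ m ⊗ id_H) ∘ (id_H ⊗ id_H ⊗ id_H ⊗ S) ∘ (id_H ⊗ id_H ⊗ swap) ∘ (Δ ⊗ id_H ⊗ id_H) ∘ (Δ ⊗ id_H). If Φ = id_{H⊗H}, then H is commutative: x·y = y·x for all x, y ∈ H. -/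

import Mathlib

open TensorProduct

noncomputable section

universe u

variable (R : Type u) [CommRing R] (H : Type u) [Ring H] [HopfAlgebra R H]

/-- The `k`-linear map `Φ : H ⊗ H → H ⊗ H`, `Φ(x ⊗ y) = Σ x₍₁₎ ⊗ x₍₂₎ · y · S(x₍₃₎)`,
given as the composite
`(id ⊗ m) ∘ (id ⊗ m ⊗ id) ∘ (id ⊗ id ⊗ id ⊗ S) ∘ (id ⊗ id ⊗ swap) ∘ (Δ ⊗ id ⊗ id) ∘ (Δ ⊗ id)`
(with the appropriate associators inserted). -/
def conjPhi : H ⊗[R] H →ₗ[R] H ⊗[R] H :=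
  -- (id ⊗ m) : H ⊗ (H ⊗ H) → H ⊗ H
  (LinearMap.lTensor H (LinearMap.mul' R H))
    -- (id ⊗ m ⊗ id) : H ⊗ ((H ⊗ H) ⊗ H) → H ⊗ (H ⊗ H)
    ∘ₗ (LinearMap.lTensor H (LinearMap.rTensor H (LinearMap.mul' R H)))
    -- reassociate H ⊗ (H ⊗ (H ⊗ H)) → H ⊗ ((H ⊗ H) ⊗ H)
    ∘ₗ (LinearMap.lTensor H (TensorProduct.assoc R H H H).symm.toLinearMap)
    -- reassociate (H ⊗ H) ⊗ (H ⊗ H) → H ⊗ (H ⊗ (H ⊗ H))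
    ∘ₗ (TensorProduct.assoc R H H (H ⊗[R] H)).toLinearMap
    -- (id ⊗ id ⊗ id ⊗ S) : (H ⊗ H) ⊗ (H ⊗ H) → (H ⊗ H) ⊗ (H ⊗ H)
    ∘ₗ (LinearMap.lTensor (H ⊗[R] H) (LinearMap.lTensor H (HopfAlgebra.antipode (R := R))))
    -- (id ⊗ id ⊗ swap) : (H ⊗ H) ⊗ (H ⊗ H) → (H ⊗ H) ⊗ (H ⊗ H)
    ∘ₗ (LinearMap.lTensor (H ⊗[R] H) (TensorProduct.comm R H H).toLinearMap)
    -- reassociate ((H ⊗ H) ⊗ H) ⊗ H → (H ⊗ H) ⊗ (H ⊗ H)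
    ∘ₗ (TensorProduct.assoc R (H ⊗[R] H) H H).toLinearMap
    -- (Δ ⊗ id ⊗ id) : (H ⊗ H) ⊗ H → ((H ⊗ H) ⊗ H) ⊗ H
    ∘ₗ (LinearMap.rTensor H (LinearMap.rTensor H (Coalgebra.comul (R := R) (A := H))))
    -- (Δ ⊗ id) : H ⊗ H → (H ⊗ H) ⊗ H
    ∘ₗ (LinearMap.rTensor H (Coalgebra.comul (R := R) (A := H)))

/-- If `H` is a cocommutative Hopf algebra and `Φ(x ⊗ y) = Σ x₍₁₎ ⊗ x₍₂₎ y S(x₍₃₎)` is the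
identity of `H ⊗ H`, then `H` is commutative. -/
theorem stmt17
    (hcc : ∀ x : H, TensorProduct.comm R H H (Coalgebra.comul (R := R) (A := H) x)
      = Coalgebra.comul (R := R) (A := H) x)
    (hΦ : conjPhi R H = LinearMap.id) :
    ∀ x y : H, x * y = y * x := by
  classical
  intro x y
  set S : H →ₗ[R] H := HopfAlgebra.antipode (R := R) with hS
  let r := Coalgebra.Repr.arbitrary R x
  let u : ∀ i : H × H, Coalgebra.Repr R (r.left i) (H × H) :=
    fun i => Coalgebra.Repr.arbitrary R (r.left i)
  let w : ∀ i : H × H, Coalgebra.Repr R (r.right i) (H × H) :=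
    fun i => Coalgebra.Repr.arbitrary R (r.right i)
  have hx : Coalgebra.comul (R := R) x = ∑ i ∈ r.index, r.left i ⊗ₜ[R] r.right i := r.eq.symm
  have hu : ∀ i, Coalgebra.comul (R := R) (r.left i)
      = ∑ j ∈ (u i).index, (u i).left j ⊗ₜ[R] (u i).right j := fun i => (u i).eq.symm
  have hw : ∀ i, Coalgebra.comul (R := R) (r.right i)
      = ∑ j ∈ (w i).index, (w i).left j ⊗ₜ[R] (w i).right j := fun i => (w i).eq.symm
  -- Key identity: Σ x₁ ⊗ x₂ y S(x₃) = x ⊗ y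
  have key : (∑ i ∈ r.index, ∑ j ∈ (u i).index,
      (u i).left j ⊗ₜ[R] ((u i).right j * y * S (r.right i))) = x ⊗ₜ[R] y := by
    have h := LinearMap.congr_fun hΦ (x ⊗ₜ[R] y)
    rw [conjPhi] at h
    simp only [LinearMap.comp_apply, LinearMap.rTensor_tmul, hx, hu, LinearMap.id_apply,
      sum_tmul, tmul_sum, map_sum, LinearMap.lTensor_tmul, LinearEquiv.coe_coe,
      TensorProduct.assoc_tmul, TensorProduct.assoc_symm_tmul, TensorProduct.comm_tmul,
      LinearMap.mul'_apply] at h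
    exact h
  -- apply flipped multiplication: Σ (x₂ y S(x₃)) x₁ = y x
  have hyx : (∑ i ∈ r.index, ∑ j ∈ (u i).index,
      (u i).right j * (y * (S (r.right i) * (u i).left j))) = y * x := by
    have h := congrArg
      (fun t => LinearMap.mul' R H ((TensorProduct.comm R H H) t)) key
    simpa only [map_sum, TensorProduct.comm_tmul, LinearMap.mul'_apply, mul_assoc] using h
  -- swap x₁'s two legs by cocommutativity
  have hswap : ∀ i ∈ r.index, (∑ j ∈ (u i).index,
        (u i).left j * (y * (S (r.right i) * (u i).right j)))
      = ∑ j ∈ (u i).index, (u i).right j * (y * (S (r.right i) * (u i).left j)) := by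
    intro i _
    have h := hcc (r.left i)
    rw [hu i, map_sum] at h
    simp only [TensorProduct.comm_tmul] at h
    have h2 := congrArg (TensorProduct.lift
      (LinearMap.mk₂ R (fun p q : H => q * (y * (S (r.right i) * p)))
        (fun m₁ m₂ n => by simp [mul_add]
        ) (fun c m n => by simp [mul_smul_comm]
        ) (fun m n₁ n₂ => by simp [add_mul]
        ) (fun c m n => by simp [smul_mul_assoc]))) h
    simpa only [map_sum, TensorProduct.lift.tmul, LinearMap.mk₂_apply] using h2
  -- coassociativity: regroup to Σ x₁ y S(x₃') x₂' where x₂', x₃' come from Δ x₂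
  have htri : (∑ i ∈ r.index, ∑ j ∈ (u i).index,
        (u i).left j * (y * (S (r.right i) * (u i).right j)))
      = ∑ i ∈ r.index, ∑ j ∈ (w i).index,
        r.left i * (y * (S ((w i).right j) * (w i).left j)) := by
    have h := Coalgebra.sum_tmul_tmul_eq r u w
    have h2 := congrArg (fun t => LinearMap.mul' R H ((LinearMap.lTensor H
      (TensorProduct.lift (LinearMap.mk₂ R (fun v t : H => y * (S t * v))
        (fun m₁ m₂ n => by simp [mul_add, add_mul]
        ) (fun c m n => by simp [mul_smul_comm, smul_mul_assoc]
        ) (fun m n₁ n₂ => by simp [mul_add, add_mul]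
        ) (fun c m n => by simp [mul_smul_comm, smul_mul_assoc])))) t)) h
    simpa only [map_sum, LinearMap.lTensor_tmul, TensorProduct.lift.tmul,
      LinearMap.mk₂_apply, LinearMap.mul'_apply] using h2
  -- antipode collapses the inner sum
  have hinner : ∀ i ∈ r.index, (∑ j ∈ (w i).index,
        r.left i * (y * (S ((w i).right j) * (w i).left j)))
      = Coalgebra.counit (R := R) (r.right i) • (r.left i * y) := by
    intro i _
    have h := hcc (r.right i)
    rw [hw i, map_sum] at h
    simp only [TensorProduct.comm_tmul] at h
    -- Σ S(right) * left = Σ S(left) * right = ε(x₂) • 1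
    have h2 := congrArg (TensorProduct.lift
      (LinearMap.mk₂ R (fun p q : H => S p * q)
        (fun m₁ m₂ n => by simp [add_mul]
        ) (fun c m n => by simp [smul_mul_assoc]
        ) (fun m n₁ n₂ => by simp [mul_add]
        ) (fun c m n => by simp [mul_smul_comm]))) h
    simp only [map_sum, TensorProduct.lift.tmul, LinearMap.mk₂_apply] at h2
    have h3 : (∑ j ∈ (w i).index, S ((w i).right j) * (w i).left j)
        = Coalgebra.counit (R := R) (r.right i) • (1 : H) := by
      rw [h2, hS]
      exact HopfAlgebra.sum_antipode_mul_eq_smul (w i)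
    rw [← Finset.mul_sum, ← Finset.mul_sum, h3]
    simp [mul_smul_comm]
  -- counit law: Σ ε(x₂) • (x₁ y) = x y
  have hfinal : (∑ i ∈ r.index, Coalgebra.counit (R := R) (r.right i) • (r.left i * y))
      = x * y := by
    have h := Coalgebra.sum_tmul_counit_eq (R := R) r
    have h2 := congrArg (TensorProduct.lift
      (LinearMap.mk₂ R (fun (p : H) (s : R) => s • (p * y))
        (fun m₁ m₂ n => by simp [add_mul]
        ) (fun c m n => by simp [smul_mul_assoc, smul_comm c]
        ) (fun m n₁ n₂ => by simp [add_smul]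
        ) (fun c m n => by simp [mul_smul]))) h
    simpa only [map_sum, TensorProduct.lift.tmul, LinearMap.mk₂_apply, one_smul] using h2
  calc x * y = ∑ i ∈ r.index, Coalgebra.counit (R := R) (r.right i) • (r.left i * y) :=
        hfinal.symm
    _ = ∑ i ∈ r.index, ∑ j ∈ (w i).index,
        r.left i * (y * (S ((w i).right j) * (w i).left j)) :=
        (Finset.sum_congr rfl hinner).symm
    _ = ∑ i ∈ r.index, ∑ j ∈ (u i).index,
        (u i).left j * (y * (S (r.right i) * (u i).right j)) := htri.symm
    _ = ∑ i ∈ r.index, ∑ j ∈ (u i).index,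
        (u i).right j * (y * (S (r.right i) * (u i).left j)) :=
        Finset.sum_congr rfl hswap
    _ = y * x := hyx
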